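/- Let γ > 1 and 0 < r < ρ. Then (( (ρ − r)/γ + r )^(−γ)) · r^(γ−1) ≤ 1/ρ, with strict inequality when r < ρ. -/
import Mathlib


/-- For `γ > 1` and `0 < r < ρ`,
`((ρ − r)/γ + r)^(−γ) · r^(γ−1) ≤ 1/ρ`, with strict inequality when `r < ρ`. -/
theorem stmt_2 (γ ρ r : ℝ) (hγ : 1 < γ) (hr : 0 < r) (hrρ : r < ρ) :
    ((ρ - r) / γ + r) ^ (-γ) * r ^ (γ - 1) ≤ 1 / ρ ∧
    ((ρ - r) / γ + r) ^ (-γ) * r ^ (γ - 1) < 1 / ρ := by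
  have hγ0 : (0:ℝ) < γ := by linarith
  have hρ : 0 < ρ := lt_trans hr hrρ
  set a := (ρ - r) / γ + r with ha_def
  have ha : 0 < a := by
    have : 0 < (ρ - r) / γ := div_pos (by linarith) hγ0
    positivity
  -- strict concavity of log
  have hw1 : 0 < 1 / γ := by positivity
  have hw2 : 0 < 1 - 1 / γ := by
    have : 1 / γ < 1 := by rw [div_lt_one hγ0]; linarith
    linarith
  have hsum : 1 / γ + (1 - 1 / γ) = 1 := by ring
  have hlog := strictConcaveOn_log_Ioi.2 (Set.mem_Ioi.mpr hρ) (Set.mem_Ioi.mpr hr)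
    (ne_of_gt hrρ) hw1 hw2 hsum
  have hcomb : (1 / γ) • ρ + (1 - 1 / γ) • r = a := by
    simp only [smul_eq_mul, ha_def]
    field_simp
    ring
  rw [hcomb] at hlog
  simp only [smul_eq_mul] at hlog
  -- key inequality: ρ * r^(γ-1) < a^γ
  have hkey : ρ * r ^ (γ - 1) < a ^ γ := by
    rw [Real.rpow_def_of_pos hr, Real.rpow_def_of_pos ha]
    calc ρ * Real.exp (Real.log r * (γ - 1))
        = Real.exp (Real.log ρ + Real.log r * (γ - 1)) := by
          rw [Real.exp_add, Real.exp_log hρ]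
      _ < Real.exp (Real.log a * γ) := by
          apply Real.exp_lt_exp.mpr
          have h := mul_lt_mul_of_pos_left hlog hγ0
          have hne : γ ≠ 0 := ne_of_gt hγ0
          field_simp at h
          nlinarith [h]
  have hlt : a ^ (-γ) * r ^ (γ - 1) < 1 / ρ := by
    rw [Real.rpow_neg ha.le]
    rw [inv_mul_eq_div, div_lt_div_iff₀ (Real.rpow_pos_of_pos ha γ) hρ]
    calc r ^ (γ - 1) * ρ = ρ * r ^ (γ - 1) := by ring
      _ < a ^ γ := hkey
      _ = 1 * a ^ γ := (one_mul _).symm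
  exact ⟨hlt.le, hlt⟩
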